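/- If M is the generator of a strongly continuous semigroup of completely positive maps e^{tM} on B(K), then for every X ∈ B(K) one has M(X*X) + X* M(1) X − M(X*) X − X* M(X) ≥ 0 (conditional complete positivity inequality). -/

import Mathlib

open Matrix ComplexConjugate MeasureTheory
open scoped Kronecker ComplexOrder

noncomputable section

/-- Ampliation `Φ ⊗ id_k` of a superoperator, acting on `B(K ⊗ ℂᵏ)`. -/
def amp {n m k : Type*} [Fintype n] [Fintype m] [Fintype k]
    (Φ : Matrix n n ℂ → Matrix m m ℂ) :
    Matrix (n × k) (n × k) ℂ → Matrix (m × k) (m × k) ℂ :=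
  fun M => Matrix.of fun p q => Φ (Matrix.of fun a b => M (a, p.2) (b, q.2)) p.1 q.1

/-- A map between matrix algebras is positive if it preserves positive semidefiniteness. -/
def IsPosMap {n m : Type*} [Fintype n] [Fintype m]
    (Φ : Matrix n n ℂ → Matrix m m ℂ) : Prop :=
  ∀ A : Matrix n n ℂ, A.PosSemidef → (Φ A).PosSemidef

/-- Complete positivity: all ampliations `Φ ⊗ id_k` are positive. -/
def IsCP {n m : Type*} [Fintype n] [Fintype m]
    (Φ : Matrix n n ℂ → Matrix m m ℂ) : Prop :=
  ∀ k : ℕ, IsPosMap (amp (k := Fin k) Φ)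

/-- Action of a supermatrix (matrix on index `n × n`) as a linear map on `B(ℂⁿ)`. -/
def supAct {n : Type*} [Fintype n]
    (L : Matrix (n × n) (n × n) ℂ) (A : Matrix n n ℂ) : Matrix n n ℂ :=
  Matrix.of fun i j => ∑ p : n × n, L (i, j) p * A p.1 p.2

/-- The standard (antilinear in the first slot) inner product on `ι → ℂ`. -/
def cinner {ι : Type*} [Fintype ι] (v w : ι → ℂ) : ℂ := ∑ i, conj (v i) * w i

/-- Elementary tensor of two vectors. -/
def tvec {n d : Type*} (φ : n → ℂ) (w : d → ℂ) : n × d → ℂ := fun p => φ p.1 * w p.2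

/-- Contraction `(φ| ⊗ 1 : K ⊗ h → h`. -/
def contrL {n d : Type*} [Fintype n] (φ : n → ℂ) (x : n × d → ℂ) : d → ℂ :=
  fun a => ∑ i, conj (φ i) * x (i, a)

/-- Partial trace over the second tensor factor. -/
def ptr {n d : Type*} [Fintype d] (M : Matrix (n × d) (n × d) ℂ) : Matrix n n ℂ :=
  Matrix.of fun i j => ∑ a, M (i, a) (j, a)

/-! ### Auxiliary lemmas -/

open scoped Topology

/-- Calculus: if `f : ℝ → ℂ` has derivative `c` at `0`, vanishes at `0` and is nonnegative
(for the complex order) on the positive reals, then `0 ≤ c`. -/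
lemma aux_deriv_nonneg {f : ℝ → ℂ} {c : ℂ} (hd : HasDerivAt f c 0)
    (h0 : f 0 = 0) (hpos : ∀ t : ℝ, 0 < t → 0 ≤ f t) : 0 ≤ c := by
  have hre : HasDerivAt (fun t => (f t).re) c.re 0 :=
    (Complex.reCLM.hasFDerivAt.comp_hasDerivAt 0 hd)
  have him : HasDerivAt (fun t => (f t).im) c.im 0 :=
    (Complex.imCLM.hasFDerivAt.comp_hasDerivAt 0 hd)
  have hmono : 𝓝[>] (0:ℝ) ≤ 𝓝[≠] (0:ℝ) :=
    nhdsWithin_mono _ fun x hx => ne_of_gt hx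
  have hre' : Filter.Tendsto (slope (fun t => (f t).re) 0) (𝓝[>] (0:ℝ)) (𝓝 c.re) :=
    ((hasDerivAt_iff_tendsto_slope.mp hre).mono_left hmono)
  have him' : Filter.Tendsto (slope (fun t => (f t).im) 0) (𝓝[>] (0:ℝ)) (𝓝 c.im) :=
    ((hasDerivAt_iff_tendsto_slope.mp him).mono_left hmono)
  have key : ∀ t : ℝ, t ∈ Set.Ioi (0:ℝ) →
      0 ≤ slope (fun t => (f t).re) 0 t ∧ slope (fun t => (f t).im) 0 t = 0 := by
    intro t ht
    have h1 : 0 ≤ f t := hpos t ht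
    rw [Complex.le_def] at h1
    constructor
    · simp only [slope_def_field, h0, Complex.zero_re, sub_zero]
      exact div_nonneg h1.1 (le_of_lt ht)
    · simp only [slope_def_field, h0, Complex.zero_im, sub_zero]
      rw [← h1.2]
      simp
  have h1 : 0 ≤ c.re := by
    refine ge_of_tendsto hre' ?_
    exact Filter.eventually_of_mem self_mem_nhdsWithin fun t ht => (key t ht).1
  have h2 : c.im = 0 := by
    have : Filter.Tendsto (slope (fun t => (f t).im) 0) (𝓝[>] (0:ℝ)) (𝓝 0) := by
      refine Filter.Tendsto.congr' ?_ tendsto_const_nhds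
      exact Filter.eventually_of_mem self_mem_nhdsWithin fun t ht => ((key t ht).2).symm
    exact (tendsto_nhds_unique him' this)
  rw [Complex.le_def]
  exact ⟨by simpa using h1, by simp [h2]⟩

/-- A complex matrix with (entrywise-order) nonnegative quadratic form is positive
semidefinite; the Hermitian part is obtained by polarization. -/
lemma aux_posSemidef_of_quadform {m : Type*} [Fintype m] [DecidableEq m] {Y : Matrix m m ℂ}
    (h : ∀ x : m → ℂ, 0 ≤ star x ⬝ᵥ Y *ᵥ x) : Y.PosSemidef := by
  have hq : ∀ x : m → ℂ, (star x ⬝ᵥ Y *ᵥ x).im = 0 := fun x =>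
    ((Complex.le_def.mp (h x)).2).symm
  have hval : ∀ (i j : m) (c : ℂ),
      star (fun k => (if k = i then 1 else 0) + (if k = j then c else 0) : m → ℂ) ⬝ᵥ
        Y *ᵥ (fun k => (if k = i then 1 else 0) + (if k = j then c else 0)) =
      Y i i + c * Y i j + conj c * Y j i + conj c * c * Y j j := by
    intro i j c
    simp only [dotProduct, mulVec, Pi.star_apply, star_add, apply_ite star, star_one, star_zero,
      dotProduct, mul_add, add_mul, Finset.sum_add_distrib, mul_ite, ite_mul, mul_zero, zero_mul,
      mul_one, one_mul, Finset.sum_ite_eq', Finset.mem_univ, if_true, starRingEnd_apply]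
    ring
  have hdiag : ∀ i : m, (Y i i).im = 0 := by
    intro i
    have h0 := hq (fun k => (if k = i then 1 else 0) + (if k = i then 0 else 0))
    rw [hval i i 0] at h0
    simpa using h0
  refine Matrix.PosSemidef.of_dotProduct_mulVec_nonneg ?_ ?_
  · ext i j
    have h1 := hq (fun k => (if k = j then 1 else 0) + (if k = i then 1 else 0))
    rw [hval j i 1] at h1
    have h2 := hq (fun k => (if k = j then 1 else 0) + (if k = i then Complex.I else 0))
    rw [hval j i Complex.I] at h2
    simp only [Complex.add_im, Complex.mul_im, Complex.one_re, Complex.one_im, _root_.map_one,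
      Complex.conj_I, Complex.I_re, Complex.I_im, Complex.mul_re, Complex.neg_re,
      Complex.neg_im, hdiag i, hdiag j] at h1 h2
    ring_nf at h1 h2
    apply Complex.ext
    · simp only [conjTranspose_apply, Complex.star_def, Complex.conj_re]
      linarith [h1, h2]
    · simp only [conjTranspose_apply, Complex.star_def, Complex.conj_im]
      linarith [h1, h2]
  · exact h

lemma sum4 {α β γ δ M : Type*} [AddCommMonoid M] [Fintype α] [Fintype β] [Fintype γ] [Fintype δ]
    (f : α → β → γ → δ → M) :
    ∑ a, ∑ b, ∑ c, ∑ d, f a b c d = ∑ b, ∑ d, ∑ a, ∑ c, f a b c d := by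
  rw [Finset.sum_comm]
  refine Finset.sum_congr rfl fun b _ => ?_
  have h1 : ∑ a, ∑ c, ∑ d, f a b c d = ∑ a, ∑ d, ∑ c, f a b c d :=
    Finset.sum_congr rfl fun a _ => Finset.sum_comm
  rw [h1, Finset.sum_comm]

/-- Structural lemma: the quadratic form of an ampliation decomposes into slices. -/
lemma amp_quadform {n k : Type*} [Fintype n] [Fintype k]
    (Φ : Matrix n n ℂ → Matrix n n ℂ) (M : Matrix (n × k) (n × k) ℂ) (u : n × k → ℂ) :
    star u ⬝ᵥ (amp Φ M) *ᵥ u =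
      ∑ s : k, ∑ t : k, star (fun i => u (i, s)) ⬝ᵥ
        (Φ (Matrix.of fun a b => M (a, s) (b, t))) *ᵥ (fun j => u (j, t)) := by
  simp only [dotProduct, mulVec, amp, Matrix.of_apply, Pi.star_apply, Fintype.sum_prod_type,
    Finset.mul_sum]
  rw [sum4 (f := fun i s j t => star (u (i, s)) *
    (Φ (Matrix.of fun a b => M (a, s) (b, t)) i j * u (j, t)))]

variable {n : ℕ}

/-- The row contraction `[X, -1]`. -/
def Cmat (X : Matrix (Fin n) (Fin n) ℂ) : Matrix (Fin n) (Fin n × Fin 2) ℂ :=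
  Matrix.of fun a q => if q.2 = 0 then X a q.1 else -(1 : Matrix (Fin n) (Fin n) ℂ) a q.1

/-- The vector `v ⊕ Xv`. -/
def uvec (X : Matrix (Fin n) (Fin n) ℂ) (v : Fin n → ℂ) : Fin n × Fin 2 → ℂ :=
  fun p => if p.2 = 0 then v p.1 else (X *ᵥ v) p.1

lemma supAct_neg (E : Matrix (Fin n × Fin n) (Fin n × Fin n) ℂ) (A : Matrix (Fin n) (Fin n) ℂ) :
    supAct E (-A) = -supAct E A := by
  ext i j
  simp [supAct, ← Finset.sum_neg_distrib]

lemma slice00 (X : Matrix (Fin n) (Fin n) ℂ) :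
    (Matrix.of fun a b => ((Cmat X)ᴴ * Cmat X) (a, (0 : Fin 2)) (b, (0 : Fin 2))) = Xᴴ * X := by
  ext a b
  simp [Cmat, Matrix.mul_apply, Fintype.sum_prod_type, Fin.sum_univ_two]

lemma slice01 (X : Matrix (Fin n) (Fin n) ℂ) :
    (Matrix.of fun a b => ((Cmat X)ᴴ * Cmat X) (a, (0 : Fin 2)) (b, (1 : Fin 2))) = -Xᴴ := by
  ext a b
  simp [Cmat, Matrix.mul_apply, Fintype.sum_prod_type, Fin.sum_univ_two, Matrix.one_apply,
    mul_ite, mul_one, mul_zero, Finset.sum_ite_eq', eq_comm]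

lemma slice10 (X : Matrix (Fin n) (Fin n) ℂ) :
    (Matrix.of fun a b => ((Cmat X)ᴴ * Cmat X) (a, (1 : Fin 2)) (b, (0 : Fin 2))) = -X := by
  ext a b
  simp [Cmat, Matrix.mul_apply, Fintype.sum_prod_type, Fin.sum_univ_two, Matrix.one_apply,
    ite_mul, one_mul, zero_mul, Finset.sum_ite_eq', eq_comm]

lemma slice11 (X : Matrix (Fin n) (Fin n) ℂ) :
    (Matrix.of fun a b => ((Cmat X)ᴴ * Cmat X) (a, (1 : Fin 2)) (b, (1 : Fin 2))) = 1 := by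
  ext a b
  simp [Cmat, Matrix.mul_apply, Fintype.sum_prod_type, Fin.sum_univ_two, Matrix.one_apply,
    ite_mul, one_mul, zero_mul, mul_ite, mul_one, mul_zero, Finset.sum_ite_eq', eq_comm]

lemma uvec0 (X : Matrix (Fin n) (Fin n) ℂ) (v : Fin n → ℂ) :
    (fun i => uvec X v (i, (0 : Fin 2))) = v := by
  funext i; simp [uvec]

lemma uvec1 (X : Matrix (Fin n) (Fin n) ℂ) (v : Fin n → ℂ) :
    (fun i => uvec X v (i, (1 : Fin 2))) = X *ᵥ v := by
  funext i; simp [uvec]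

/-- The key algebraic identity: the quadratic form of the ampliated map at the special
vector and special positive matrix computes the conditional-CP quadratic form. -/
lemma key_identity (E : Matrix (Fin n × Fin n) (Fin n × Fin n) ℂ)
    (X : Matrix (Fin n) (Fin n) ℂ) (v : Fin n → ℂ) :
    star (uvec X v) ⬝ᵥ (amp (supAct E) ((Cmat X)ᴴ * Cmat X)) *ᵥ (uvec X v) =
    star v ⬝ᵥ (supAct E (Xᴴ * X) + Xᴴ * supAct E 1 * X
        - supAct E Xᴴ * X - Xᴴ * supAct E X) *ᵥ v := by
  rw [amp_quadform]
  simp only [Fin.sum_univ_two]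
  rw [slice00, slice01, slice10, slice11, uvec0, uvec1, supAct_neg, supAct_neg]
  rw [star_mulVec]
  simp only [dotProduct_mulVec, Matrix.vecMul_neg, Matrix.neg_vecMul, neg_dotProduct,
    Matrix.vecMul_add, Matrix.vecMul_sub, ← Matrix.vecMul_vecMul, add_dotProduct,
    sub_dotProduct, Matrix.smul_vecMul, smul_dotProduct]
  abel

lemma supAct_addE (E E' : Matrix (Fin n × Fin n) (Fin n × Fin n) ℂ)
    (A : Matrix (Fin n) (Fin n) ℂ) : supAct (E + E') A = supAct E A + supAct E' A := by
  ext i j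
  simp [supAct, add_mul, Finset.sum_add_distrib]

lemma supAct_smulE (c : ℂ) (E : Matrix (Fin n × Fin n) (Fin n × Fin n) ℂ)
    (A : Matrix (Fin n) (Fin n) ℂ) : supAct (c • E) A = c • supAct E A := by
  ext i j
  simp [supAct, Finset.mul_sum, mul_assoc]

lemma supAct_one (A : Matrix (Fin n) (Fin n) ℂ) : supAct 1 A = A := by
  ext i j
  have : ∀ p : Fin n × Fin n, (1 : Matrix (Fin n × Fin n) (Fin n × Fin n) ℂ) (i, j) p
      = if p = (i, j) then 1 else 0 := by
    intro p; simp [Matrix.one_apply, eq_comm]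
  simp only [supAct, Matrix.of_apply, this, ite_mul, one_mul, zero_mul,
    Finset.sum_ite_eq', Finset.mem_univ, if_true]

/-- The conditional-CP quadratic form, as a linear functional of the generator. -/
def qform (X : Matrix (Fin n) (Fin n) ℂ) (v : Fin n → ℂ) :
    Matrix (Fin n × Fin n) (Fin n × Fin n) ℂ →ₗ[ℂ] ℂ where
  toFun E := star v ⬝ᵥ (supAct E (Xᴴ * X) + Xᴴ * supAct E 1 * X
      - supAct E Xᴴ * X - Xᴴ * supAct E X) *ᵥ v
  map_add' E E' := by
    simp only [supAct_addE, mul_add, add_mul, add_mulVec, sub_mulVec, dotProduct_add,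
      dotProduct_sub]
    ring
  map_smul' c E := by
    simp only [supAct_smulE, mul_smul_comm, smul_mul_assoc, RingHom.id_apply, smul_eq_mul]
    rw [← smul_add, ← smul_sub, ← smul_sub, smul_mulVec, dotProduct_smul, smul_eq_mul]

/-- Conditional complete positivity of the generator of a completely positive semigroup:
`M(X*X) + X* M(1) X − M(X*) X − X* M(X) ≥ 0`. -/
theorem generator_conditionally_cp {n : ℕ}
    (L : Matrix (Fin n × Fin n) (Fin n × Fin n) ℂ)
    (hcp : ∀ t : ℝ, 0 ≤ t → IsCP (supAct (NormedSpace.exp ((t : ℂ) • L)))) :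
    ∀ X : Matrix (Fin n) (Fin n) ℂ,
      (supAct L (Xᴴ * X) + Xᴴ * supAct L 1 * X
        - supAct L Xᴴ * X - Xᴴ * supAct L X).PosSemidef := by
  intro X
  apply aux_posSemidef_of_quadform
  intro v
  letI : SeminormedRing (Matrix (Fin n × Fin n) (Fin n × Fin n) ℂ) :=
    Matrix.linftyOpSemiNormedRing
  letI : NormedRing (Matrix (Fin n × Fin n) (Fin n × Fin n) ℂ) := Matrix.linftyOpNormedRing
  letI : NormedAlgebra ℂ (Matrix (Fin n × Fin n) (Fin n × Fin n) ℂ) :=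
    Matrix.linftyOpNormedAlgebra
  set Λ : Matrix (Fin n × Fin n) (Fin n × Fin n) ℂ →L[ℂ] ℂ :=
    LinearMap.toContinuousLinearMap (qform X v) with hΛ
  have hΛ_apply : ∀ E, Λ E = star v ⬝ᵥ (supAct E (Xᴴ * X) + Xᴴ * supAct E 1 * X
      - supAct E Xᴴ * X - Xᴴ * supAct E X) *ᵥ v := fun E => rfl
  have hexp := hasDerivAt_exp_smul_const (𝕂 := ℂ) L (0 : ℂ)
  have h2 : HasDerivAt (fun z : ℂ => Λ (NormedSpace.exp (z • L)))
      (Λ (NormedSpace.exp ((0 : ℂ) • L) * L)) 0 :=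
    Λ.hasFDerivAt.comp_hasDerivAt 0 hexp
  have h3 : HasDerivAt (fun t : ℝ => Λ (NormedSpace.exp ((t : ℂ) • L))) (Λ L) 0 := by
    have h4 : HasDerivAt (fun t : ℝ => Λ (NormedSpace.exp ((t : ℂ) • L)))
        (Λ (NormedSpace.exp ((0 : ℂ) • L) * L)) 0 := by exact_mod_cast h2.comp_ofReal
    rwa [zero_smul, NormedSpace.exp_zero, one_mul] at h4
  have h0 : Λ (NormedSpace.exp (((0 : ℝ) : ℂ) • L)) = 0 := by
    rw [Complex.ofReal_zero, zero_smul, NormedSpace.exp_zero, hΛ_apply, supAct_one, supAct_one,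
      supAct_one, supAct_one]
    simp [Matrix.mul_one, Matrix.one_mul]
  have hpos : ∀ t : ℝ, 0 < t → 0 ≤ Λ (NormedSpace.exp ((t : ℂ) • L)) := by
    intro t ht
    rw [hΛ_apply, ← key_identity]
    have hP : ((Cmat X)ᴴ * Cmat X).PosSemidef := Matrix.posSemidef_conjTranspose_mul_self _
    exact (hcp t ht.le 2 ((Cmat X)ᴴ * Cmat X) hP).dotProduct_mulVec_nonneg (uvec X v)
  have := aux_deriv_nonneg h3 h0 hpos
  rwa [hΛ_apply] at this
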